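/- Let a, b, c be positive functions satisfying the E(2) Ricci flow ODE a' = (c² - a²)/(2bc), b' = (c - a)²/(2ca), c' = (a² - c²)/(2ab), and set k = a/c. Then b' = (1 - k)²/(2k), k' = (1 - k²)/b, and b = l₀·√k/(1 + k) where l₀ = b(0)·(1 + k(0))/√(k(0)). -/

import Mathlib

/-- E(2) Ricci flow in terms of k = a/c, and the formula b = l₀ √k/(1+k). -/
theorem e2_k_equations (a b c : ℝ → ℝ)
    (hapos : ∀ t, 0 < a t) (hbpos : ∀ t, 0 < b t) (hcpos : ∀ t, 0 < c t)
    (ha : Differentiable ℝ a) (hb : Differentiable ℝ b) (hc : Differentiable ℝ c)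
    (hda : ∀ t, deriv a t = ((c t) ^ 2 - (a t) ^ 2) / (2 * b t * c t))
    (hdb : ∀ t, deriv b t = (c t - a t) ^ 2 / (2 * c t * a t))
    (hdc : ∀ t, deriv c t = ((a t) ^ 2 - (c t) ^ 2) / (2 * a t * b t)) :
    ∀ t, deriv b t = (1 - a t / c t) ^ 2 / (2 * (a t / c t)) ∧
      deriv (fun s => a s / c s) t = (1 - (a t / c t) ^ 2) / b t ∧
      b t = (b 0 * (1 + a 0 / c 0) / Real.sqrt (a 0 / c 0)) *
        Real.sqrt (a t / c t) / (1 + a t / c t) := by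
  have hk : ∀ t, 0 < a t / c t := fun t => div_pos (hapos t) (hcpos t)
  have hs : ∀ t, 0 < Real.sqrt (a t / c t) := fun t => Real.sqrt_pos.2 (hk t)
  have hsq : ∀ t, Real.sqrt (a t / c t) ^ 2 = a t / c t := fun t => Real.sq_sqrt (hk t).le
  have hK : ∀ t, HasDerivAt (fun s => a s / c s) ((1 - (a t / c t) ^ 2) / b t) t := by
    intro t
    have h := ((ha t).hasDerivAt).div ((hc t).hasDerivAt) (hcpos t).ne'
    refine h.congr_deriv ?_
    rw [hda, hdc]
    have ha0 := (hapos t).ne'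
    have hb0 := (hbpos t).ne'
    have hc0 := (hcpos t).ne'
    field_simp
    ring
  have hB : ∀ t, deriv b t = (1 - a t / c t) ^ 2 / (2 * (a t / c t)) := by
    intro t; rw [hdb]
    have ha0 := (hapos t).ne'
    have hc0 := (hcpos t).ne'
    field_simp
  set F : ℝ → ℝ := fun t => b t * (1 + a t / c t) / Real.sqrt (a t / c t) with hF
  have hFd : ∀ t, HasDerivAt F 0 t := by
    intro t
    have hnum : HasDerivAt (fun s => b s * (1 + a s / c s))
        (deriv b t * (1 + a t / c t) + b t * (0 + (1 - (a t / c t) ^ 2) / b t)) t :=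
      ((hb t).hasDerivAt).mul ((hasDerivAt_const t (1 : ℝ)).add (hK t))
    have hden : HasDerivAt (fun s => Real.sqrt (a s / c s))
        (1 / (2 * Real.sqrt (a t / c t)) * ((1 - (a t / c t) ^ 2) / b t)) t :=
      (Real.hasDerivAt_sqrt (hk t).ne').comp t (hK t)
    have h := hnum.div hden (hs t).ne'
    refine h.congr_deriv ?_
    rw [hB t]
    have hb0 := (hbpos t).ne'
    have hs0 := (hs t).ne'
    have hkk : a t / c t = Real.sqrt (a t / c t) ^ 2 := (hsq t).symm
    set s := Real.sqrt (a t / c t) with hsdef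
    rw [hkk]
    field_simp
    ring
  have hFc : ∀ t, F t = F 0 :=
    fun t => is_const_of_deriv_eq_zero (fun x => (hFd x).differentiableAt)
      (fun x => (hFd x).deriv) t 0
  intro t
  refine ⟨hB t, (hK t).deriv, ?_⟩
  have h := hFc t
  simp only [hF] at h
  rw [← h]
  have h1 : (0 : ℝ) < 1 + a t / c t := by have := hk t; linarith
  have hs0 := (hs t).ne'
  field_simp
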